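/- Assume n ≤ m and let i be an integer with 1 ≤ i ≤ 2N−1 and i ≠ N; set D = (m+n)N + i. Let a₀,…,a_{D−1} ∈ ℂ and p = ∑_{s=0}^{D−1} aₛ·z^{D−s}·w^{s}. Then p is quasi-invariant if and only if the following two families of linear equations hold: (i) for every t with 1 ≤ t ≤ n and every r with 0 ≤ r ≤ 2N−1, ∑_{0 ≤ s ≤ D−1, s ≡ r (mod 2N)} aₛ·(D−2s)^{2t−1} = 0; (ii) for every t with n < t ≤ m and every r with 0 ≤ r ≤ N−1, ∑_{0 ≤ s ≤ D−1, s ≡ r (mod N)} aₛ·(D−2s)^{2t−1} = 0. -/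

import Mathlib

open MvPolynomial Finset

noncomputable section

/-- The polynomial ring `R = ℂ[z,w]`. -/
abbrev R2 : Type := MvPolynomial (Fin 2) ℂ

/-- `z`, the first variable. -/
def zP : R2 := X 0

/-- `w`, the second variable (playing the role of `z̄`). -/
def wP : R2 := X 1

/-- `ε = exp(πi/N)`, a primitive `2N`-th root of unity. -/
def eps (N : ℕ) : ℂ := Complex.exp ((Real.pi : ℂ) * Complex.I / (N : ℂ))

/-- The reflection `σⱼ : z ↦ ε^j w, w ↦ ε^{-j} z` as a `ℂ`-algebra endomorphism. -/
def dihRefl (N j : ℕ) : R2 →ₐ[ℂ] R2 :=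
  aeval (fun k : Fin 2 => if k = 0 then C (eps N ^ j) * X 1 else C (eps N ^ (-(j : ℤ))) * X 0)

/-- The multiplicity `mⱼ`: `m` for even `j`, `n` for odd `j`. -/
def mult (m n j : ℕ) : ℕ := if Even j then m else n

/-- Quasi-invariance for the dihedral system `I₂(2N)` with multiplicities `(m,n)`. -/
def IsQuasiInv (N m n : ℕ) (p : R2) : Prop :=
  ∀ j < 2 * N, (zP - C (eps N ^ j) * wP) ^ (2 * mult m n j + 1) ∣ dihRefl N j p - p


set_option linter.unusedSectionVars false
set_option maxHeartbeats 1000000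

namespace QIaux

section SingleVar
variable {R : Type*} [CommRing R] [IsDomain R] [CharZero R]



/-- The Euler operator `f ↦ Polynomial.X f'`. -/
def Eop (f : (Polynomial R)) : (Polynomial R) := Polynomial.X * Polynomial.derivative f

lemma Eop_C_mul_X_pow (a : R) (k : ℕ) : Eop (Polynomial.C a * Polynomial.X ^ k) = Polynomial.C (a * k) * Polynomial.X ^ k := by
  rcases Nat.eq_zero_or_pos k with hk | hk
  · simp [hk, Eop]
  · rw [Eop, Polynomial.derivative_C_mul, Polynomial.derivative_X_pow]
    rw [show Polynomial.C a * (Polynomial.C (k:R) * Polynomial.X ^ (k-1)) = Polynomial.C (a * k) * Polynomial.X ^ (k-1) by rw [Polynomial.C_mul]; ring]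
    rw [← mul_assoc, mul_comm Polynomial.X, mul_assoc, ← pow_succ']
    congr 2
    omega

lemma Eop_iter_C_mul_X_pow (a : R) (k t : ℕ) :
    Eop^[t] (Polynomial.C a * Polynomial.X ^ k) = Polynomial.C (a * (k:R) ^ t) * Polynomial.X ^ k := by
  induction t with
  | zero => simp
  | succ t ih => rw [Function.iterate_succ_apply', ih, Eop_C_mul_X_pow, mul_assoc, pow_succ]

lemma Eop_iter_sum (c : ℕ → R) (S : Finset ℕ) (t : ℕ) :
    Eop^[t] (∑ k ∈ S, Polynomial.C (c k) * Polynomial.X ^ k) = ∑ k ∈ S, Polynomial.C (c k * (k:R) ^ t) * Polynomial.X ^ k := by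
  induction t with
  | zero => simp
  | succ t ih =>
      rw [Function.iterate_succ_apply', ih, Eop, Polynomial.derivative_sum, Finset.mul_sum]
      refine Finset.sum_congr rfl fun k _ => ?_
      have := Eop_C_mul_X_pow (c k * (k:R)^t) k
      rw [Eop] at this
      rw [this, mul_assoc, pow_succ]

lemma eval_Eop_iter_sum (c : ℕ → R) (S : Finset ℕ) (t : ℕ) (lam : R) :
    Polynomial.eval lam (Eop^[t] (∑ k ∈ S, Polynomial.C (c k) * Polynomial.X ^ k)) = ∑ k ∈ S, c k * (k:R) ^ t * lam ^ k := by
  rw [Eop_iter_sum, Polynomial.eval_finset_sum]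
  refine Finset.sum_congr rfl fun k _ => by simp





variable {R : Type*} [CommRing R] [IsDomain R] [CharZero R]

lemma Eop_factor (lam : R) (k : ℕ) (h : (Polynomial R)) :
    ∃ u : (Polynomial R), Eop ((Polynomial.X - Polynomial.C lam) ^ (k+1) * h) = (Polynomial.X - Polynomial.C lam) ^ k * u ∧
      Polynomial.eval lam u = (k+1) * lam * Polynomial.eval lam h := by
  refine ⟨Polynomial.X * (((k:(Polynomial R))+1) * h + (Polynomial.X - Polynomial.C lam) * Polynomial.derivative h), ?_, by simp; ring⟩
  rw [Eop, Polynomial.derivative_mul, Polynomial.derivative_pow, Nat.add_sub_cancel, Polynomial.derivative_sub,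
    Polynomial.derivative_X, Polynomial.derivative_C, sub_zero, mul_one]
  simp only [Nat.cast_add, Nat.cast_one, Polynomial.C_add, Polynomial.C_1, Polynomial.C_eq_natCast]
  ring

lemma Eop_iter_factor (lam : R) : ∀ (j k : ℕ) (h : (Polynomial R)),
    ∃ (u : (Polynomial R)) (c : ℕ), 0 < c ∧ Eop^[j] ((Polynomial.X - Polynomial.C lam) ^ (k+j) * h) = (Polynomial.X - Polynomial.C lam) ^ k * u ∧
      Polynomial.eval lam u = (c : R) * lam ^ j * Polynomial.eval lam h := by
  intro j
  induction j with
  | zero => exact fun k h => ⟨h, 1, by simp⟩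
  | succ j ih =>
      intro k h
      obtain ⟨u₁, hu₁, he₁⟩ := Eop_factor lam (k+j) h
      obtain ⟨u, c, hc, hu, he⟩ := ih k u₁
      refine ⟨u, c * (k+j+1), by positivity, ?_, ?_⟩
      · rw [Function.iterate_succ_apply, show k + (j+1) = (k+j)+1 by ring, hu₁, hu]
      · rw [he, he₁]; push_cast; ring

/-- Key single-variable lemma. -/
lemma dvd_iff_moments (lam : R) (hlam : lam ≠ 0) (c : ℕ → R) (K M : ℕ) :
    ((Polynomial.X - Polynomial.C lam) ^ M ∣ ∑ k ∈ Finset.range K, Polynomial.C (c k) * Polynomial.X ^ k) ↔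
      ∀ t < M, ∑ k ∈ Finset.range K, c k * (k:R) ^ t * lam ^ k = 0 := by
  constructor
  · rintro ⟨g, hg⟩ t ht
    rw [← eval_Eop_iter_sum, hg, show M = (M - t) + t by omega]
    obtain ⟨u, cc, hcc, hu, he⟩ := Eop_iter_factor lam t (M - t) g
    rw [hu, Polynomial.eval_mul, Polynomial.eval_pow, Polynomial.eval_sub, Polynomial.eval_X, Polynomial.eval_C, sub_self,
      zero_pow (by omega), zero_mul]
  · intro H
    induction M with
    | zero => exact one_dvd _
    | succ M ih =>
        obtain ⟨g, hg⟩ := ih fun t ht => H t (by omega)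
        have h0 : Polynomial.eval lam (Eop^[M] (∑ k ∈ Finset.range K, Polynomial.C (c k) * Polynomial.X ^ k)) = 0 := by
          rw [eval_Eop_iter_sum]; exact H M (by omega)
        obtain ⟨u, cc, hcc, hu, he⟩ := Eop_iter_factor lam M 0 g
        rw [zero_add, pow_zero, one_mul] at hu
        rw [hg, hu] at h0
        rw [h0] at he
        have hgl : Polynomial.eval lam g = 0 := by
          have h1 : (cc : R) ≠ 0 := Nat.cast_ne_zero.mpr (by omega)
          have h2 : lam ^ M ≠ 0 := pow_ne_zero _ hlam
          have he := (mul_eq_zero.mp he.symm).resolve_left (mul_ne_zero h1 h2)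
          tauto
        have : (Polynomial.X - Polynomial.C lam) ∣ g := Polynomial.dvd_iff_isRoot.mpr hgl
        rw [hg, pow_succ]
        exact mul_dvd_mul_left _ this



end SingleVar

def Φ : R2 ≃ₐ[ℂ] Polynomial (MvPolynomial (Fin 1) ℂ) := MvPolynomial.finSuccEquiv ℂ 1

lemma Φ_z : Φ zP = Polynomial.X := MvPolynomial.finSuccEquiv_X_zero
lemma Φ_w : Φ wP = Polynomial.C (X 0) := by
  have : (wP : R2) = X (0 : Fin 1).succ := rfl
  rw [this, Φ]; exact MvPolynomial.finSuccEquiv_X_succ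
lemma Φ_C (a : ℂ) : Φ (C a) = Polynomial.C (C a) := by
  simp [Φ, MvPolynomial.finSuccEquiv_apply]


/-- Two-variable divisibility criterion. -/
lemma dvd_iff_moments2 (lam : ℂ) (hlam : lam ≠ 0) (c : ℕ → ℂ) (D M : ℕ) :
    ((zP - C lam * wP) ^ M ∣ ∑ k ∈ Finset.range (D+1), C (c k) * zP ^ k * wP ^ (D - k)) ↔
      ∀ t < M, ∑ k ∈ Finset.range (D+1), c k * (k:ℂ) ^ t * lam ^ k = 0 := by
  have hdvd : ((zP - C lam * wP) ^ M ∣ ∑ k ∈ Finset.range (D+1), C (c k) * zP ^ k * wP ^ (D - k))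
      ↔ (Φ ((zP - C lam * wP) ^ M) ∣ Φ (∑ k ∈ Finset.range (D+1), C (c k) * zP ^ k * wP ^ (D - k))) := by
    constructor
    · exact fun h => map_dvd Φ.toAlgHom h
    · intro h
      have := map_dvd Φ.symm.toAlgHom h
      simpa using this
  rw [hdvd]
  have h1 : Φ ((zP - C lam * wP) ^ M)
      = (Polynomial.X - Polynomial.C (C lam * X 0)) ^ M := by
    rw [map_pow, map_sub, map_mul, Φ_z, Φ_w, Φ_C, ← Polynomial.C_mul]
  have h2 : Φ (∑ k ∈ Finset.range (D+1), C (c k) * zP ^ k * wP ^ (D - k))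
      = ∑ k ∈ Finset.range (D+1), Polynomial.C (C (c k) * (X 0) ^ (D - k)) * Polynomial.X ^ k := by
    rw [map_sum]
    refine Finset.sum_congr rfl fun k _ => ?_
    rw [map_mul, map_mul, map_pow, map_pow, Φ_z, Φ_w, Φ_C, ← Polynomial.C_pow,
      Polynomial.C_mul]
    ring
  have hne : (C lam * X 0 : MvPolynomial (Fin 1) ℂ) ≠ 0 :=
    mul_ne_zero (by simpa using hlam) (MvPolynomial.X_ne_zero 0)
  rw [h1, h2, dvd_iff_moments (C lam * X 0) hne _ _ M]
  have key : ∀ t, ∑ k ∈ Finset.range (D+1), (C (c k) * (X 0 : MvPolynomial (Fin 1) ℂ) ^ (D - k)) * (k : MvPolynomial (Fin 1) ℂ) ^ t * (C lam * X 0) ^ k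
      = C (∑ k ∈ Finset.range (D+1), c k * (k:ℂ) ^ t * lam ^ k) * (X 0 : MvPolynomial (Fin 1) ℂ) ^ D := by
    intro t
    rw [map_sum, Finset.sum_mul]
    refine Finset.sum_congr rfl fun k hk => ?_
    have hkD : k ≤ D := by simpa [Nat.lt_succ_iff] using hk
    have : (X 0 : MvPolynomial (Fin 1) ℂ) ^ (D - k) * X 0 ^ k = X 0 ^ D := by
      rw [← pow_add]; congr 1; omega
    calc C (c k) * (X 0:MvPolynomial (Fin 1) ℂ) ^ (D - k) * (k : MvPolynomial (Fin 1) ℂ) ^ t * (C lam * X 0) ^ k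
        = (C (c k) * ((k:ℕ):MvPolynomial (Fin 1) ℂ) ^ t * C lam ^ k) * (X 0 ^ (D-k) * X 0 ^ k) := by ring
      _ = C (c k * (k:ℂ) ^ t * lam ^ k) * X 0 ^ D := by
          rw [this, ← MvPolynomial.C_pow, show ((k:ℕ):MvPolynomial (Fin 1) ℂ) = C ((k:ℕ):ℂ) by simp,
            ← MvPolynomial.C_pow, ← MvPolynomial.C_mul, ← MvPolynomial.C_mul]
  constructor
  · intro H t ht
    have := H t ht
    rw [key t] at this
    rcases mul_eq_zero.mp this with h | h
    · simpa using (MvPolynomial.C_eq_zero.mp h)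
    · exact absurd h (pow_ne_zero _ (MvPolynomial.X_ne_zero 0))
  · intro H t ht
    rw [key t, H t ht]
    simp

lemma pow_sub_pow_expand (d x : ℂ) (t : ℕ) :
    2 ^ t * (x ^ t - (d - x) ^ t) =
      ∑ l ∈ Finset.range (t+1),
        (t.choose l : ℂ) * d ^ (t - l) * ((-1) ^ l - 1) * (d - 2*x) ^ l := by
  have h1 : (2:ℂ) ^ t * x ^ t = (-(d - 2*x) + d) ^ t := by
    rw [show -(d - 2*x) + d = 2*x by ring, mul_pow]
  have h2 : (2:ℂ) ^ t * (d - x) ^ t = ((d - 2*x) + d) ^ t := by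
    rw [show (d - 2*x) + d = 2*(d-x) by ring, mul_pow]
  rw [mul_sub, h1, h2, add_pow, add_pow, ← Finset.sum_sub_distrib]
  refine Finset.sum_congr rfl fun l hl => ?_
  rw [neg_pow]
  ring

/-- transform between the two families of moment sums -/
lemma moment_sum_transform (b : ℕ → ℂ) (Dn t : ℕ) :
    2 ^ t * (∑ s ∈ Finset.range Dn, b s * ((s:ℂ) ^ t - ((Dn:ℂ) - s) ^ t)) =
      ∑ l ∈ Finset.range (t+1),
        (t.choose l : ℂ) * (Dn:ℂ) ^ (t - l) * ((-1) ^ l - 1) *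
          (∑ s ∈ Finset.range Dn, b s * ((Dn:ℂ) - 2*s) ^ l) := by
  calc 2 ^ t * (∑ s ∈ Finset.range Dn, b s * ((s:ℂ) ^ t - ((Dn:ℂ) - s) ^ t))
      = ∑ s ∈ Finset.range Dn, b s * (2 ^ t * ((s:ℂ) ^ t - ((Dn:ℂ) - s) ^ t)) := by
        rw [Finset.mul_sum]; exact Finset.sum_congr rfl fun s _ => by ring
    _ = ∑ s ∈ Finset.range Dn, ∑ l ∈ Finset.range (t+1),
          b s * ((t.choose l : ℂ) * (Dn:ℂ) ^ (t - l) * ((-1) ^ l - 1) * ((Dn:ℂ) - 2*s) ^ l) := by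
        refine Finset.sum_congr rfl fun s _ => ?_
        rw [pow_sub_pow_expand (Dn:ℂ) (s:ℂ) t, Finset.mul_sum]
    _ = ∑ l ∈ Finset.range (t+1), ∑ s ∈ Finset.range Dn,
          b s * ((t.choose l : ℂ) * (Dn:ℂ) ^ (t - l) * ((-1) ^ l - 1) * ((Dn:ℂ) - 2*s) ^ l) :=
        Finset.sum_comm
    _ = _ := by
        refine Finset.sum_congr rfl fun l _ => ?_
        rw [Finset.mul_sum]
        exact Finset.sum_congr rfl fun s _ => by ring

/-- equivalence of the symmetric-difference moments with the odd-power moments -/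
lemma moments_iff_odd (b : ℕ → ℂ) (Dn M' : ℕ) :
    (∀ t < 2 * M' + 1, ∑ s ∈ Finset.range Dn, b s * ((s:ℂ) ^ t - ((Dn:ℂ) - s) ^ t) = 0) ↔
      (∀ t, 1 ≤ t → t ≤ M' →
        ∑ s ∈ Finset.range Dn, b s * ((Dn:ℂ) - 2*s) ^ (2*t - 1) = 0) := by
  constructor
  · intro H t
    induction t using Nat.strong_induction_on with
    | _ t ih =>
      intro ht1 ht2
      have hT : 2*t - 1 < 2*M' + 1 := by omega
      have h0 := H (2*t-1) hT
      have h1 := moment_sum_transform b Dn (2*t-1)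
      rw [h0, mul_zero] at h1
      rw [show 2*t - 1 + 1 = (2*t - 1) + 1 from rfl] at h1
      rw [Finset.sum_range_succ] at h1
      have hodd : Odd (2*t - 1) := ⟨t - 1, by omega⟩
      have hlast : ((2*t-1).choose (2*t-1) : ℂ) * (Dn:ℂ) ^ (2*t-1-(2*t-1)) * ((-1) ^ (2*t-1) - 1) = -2 := by
        rw [Nat.choose_self, Nat.sub_self, hodd.neg_one_pow]
        norm_num
      have hzero : ∑ l ∈ Finset.range (2*t-1),
          ((2*t-1).choose l : ℂ) * (Dn:ℂ) ^ (2*t-1 - l) * ((-1) ^ l - 1) *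
            (∑ s ∈ Finset.range Dn, b s * ((Dn:ℂ) - 2*s) ^ l) = 0 := by
        refine Finset.sum_eq_zero fun l hl => ?_
        rcases Nat.even_or_odd l with he | ho
        · rw [he.neg_one_pow]; ring
        · obtain ⟨r, hr⟩ := ho
          have hl' : l < 2*t - 1 := Finset.mem_range.mp hl
          have : ∑ s ∈ Finset.range Dn, b s * ((Dn:ℂ) - 2*s) ^ l = 0 := by
            have := ih (r+1) (by omega) (by omega) (by omega)
            rw [show 2*(r+1) - 1 = l by omega] at this
            exact this
          rw [this, mul_zero]
      rw [hzero, hlast, zero_add] at h1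
      exact (mul_eq_zero.mp h1.symm).resolve_left (by norm_num)
  · intro H t ht
    have h1 := moment_sum_transform b Dn t
    have hzero : ∑ l ∈ Finset.range (t+1),
        (t.choose l : ℂ) * (Dn:ℂ) ^ (t - l) * ((-1) ^ l - 1) *
          (∑ s ∈ Finset.range Dn, b s * ((Dn:ℂ) - 2*s) ^ l) = 0 := by
      refine Finset.sum_eq_zero fun l hl => ?_
      rcases Nat.even_or_odd l with he | ho
      · rw [he.neg_one_pow]; ring
      · obtain ⟨r, hr⟩ := ho
        have hl' : l < t + 1 := Finset.mem_range.mp hl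
        have : ∑ s ∈ Finset.range Dn, b s * ((Dn:ℂ) - 2*s) ^ l = 0 := by
          have := H (r+1) (by omega) (by omega)
          rw [show 2*(r+1) - 1 = l by omega] at this
          exact this
        rw [this, mul_zero]
    rw [hzero] at h1
    have h2 : (2:ℂ) ^ t ≠ 0 := pow_ne_zero _ two_ne_zero
    exact (mul_eq_zero.mp h1).resolve_left h2


lemma dft_partition {K : ℕ} (hK : 0 < K) {z : ℂ} (hzK : z ^ K = 1) (b : ℕ → ℂ) (D' j : ℕ) :
    ∑ s ∈ Finset.range D', b s * z ^ (j * s) =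
      ∑ r ∈ Finset.range K, z ^ (j * r) *
        ∑ s ∈ (Finset.range D').filter (fun s => s % K = r), b s := by
  rw [← Finset.sum_fiberwise_of_maps_to (g := fun s => s % K)
    (fun s _ => Finset.mem_range.mpr (Nat.mod_lt s hK))]
  refine Finset.sum_congr rfl fun r _ => ?_
  rw [Finset.mul_sum]
  refine Finset.sum_congr rfl fun s hs => ?_
  obtain ⟨-, hsr⟩ := Finset.mem_filter.mp hs
  have hzs : z ^ (j * s) = z ^ (j * r) := by
    conv_lhs => rw [show s = K * (s / K) + s % K from (Nat.div_add_mod s K).symm.trans (by ring_nf),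
      hsr]
    rw [Nat.mul_add, pow_add, show j * (K * (s / K)) = K * (j * (s / K)) by ring,
      pow_mul, hzK, one_pow, one_mul]
  rw [hzs]; ring

lemma dft_iff {K : ℕ} (hK : 0 < K) {z : ℂ} (hz : IsPrimitiveRoot z K) (b : ℕ → ℂ) (D' : ℕ) :
    (∀ j < K, ∑ s ∈ Finset.range D', b s * z ^ (j * s) = 0) ↔
      (∀ r < K, ∑ s ∈ (Finset.range D').filter (fun s => s % K = r), b s = 0) := by
  have hzK : z ^ K = 1 := hz.pow_eq_one
  constructor
  · intro H r hr
    have key : ∑ j ∈ Finset.range K, z ^ (j * (K - r)) *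
        ∑ s ∈ Finset.range D', b s * z ^ (j * s) = 0 :=
      Finset.sum_eq_zero fun j hj => by rw [H j (Finset.mem_range.mp hj), mul_zero]
    have expand : ∀ j, z ^ (j * (K - r)) * ∑ s ∈ Finset.range D', b s * z ^ (j * s)
        = ∑ r' ∈ Finset.range K, (z ^ (K - r + r')) ^ j *
            ∑ s ∈ (Finset.range D').filter (fun s => s % K = r'), b s := by
      intro j
      rw [dft_partition hK hzK, Finset.mul_sum]
      refine Finset.sum_congr rfl fun r' _ => ?_
      rw [← mul_assoc, ← pow_add, ← pow_mul]
      congr 2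
      ring
    rw [Finset.sum_congr rfl (fun j _ => expand j), Finset.sum_comm] at key
    have orth : ∀ r' ∈ Finset.range K, r' ≠ r →
        ∑ j ∈ Finset.range K, (z ^ (K - r + r')) ^ j = 0 := by
      intro r' hr' hne
      have h1 : z ^ (K - r + r') ≠ 1 := by
        intro heq
        have hdvd := (hz.pow_eq_one_iff_dvd _).mp heq
        have hrr' := Finset.mem_range.mp hr'
        obtain ⟨c, hc⟩ := hdvd
        have hKr : K - r + r' = K := by
          rcases Nat.lt_or_ge c 2 with h | h
          · interval_cases c <;> omega
          · have := Nat.mul_le_mul_left K h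
            omega
        omega
      have hxK : (z ^ (K - r + r')) ^ K = 1 := by
        rw [← pow_mul, mul_comm, pow_mul, hzK, one_pow]
      rw [geom_sum_eq h1, hxK, sub_self, zero_div]
    have keyr : ∑ r' ∈ Finset.range K,
        (∑ j ∈ Finset.range K, (z ^ (K - r + r')) ^ j) *
          (∑ s ∈ (Finset.range D').filter (fun s => s % K = r'), b s) = 0 := by
      rw [← key]
      exact Finset.sum_congr rfl fun r' _ => by rw [Finset.sum_mul]
    rw [Finset.sum_eq_single r (fun r' hr' hne => by rw [orth r' hr' hne, zero_mul])
      (fun h => absurd (Finset.mem_range.mpr hr) h)] at keyr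
    have hone : z ^ (K - r + r) = 1 := by rw [show K - r + r = K by omega, hzK]
    rw [Finset.sum_congr rfl (fun j _ => by rw [hone, one_pow] : ∀ j ∈ Finset.range K, (z ^ (K - r + r)) ^ j = 1)] at keyr
    rw [Finset.sum_const, Finset.card_range, nsmul_eq_mul, mul_one] at keyr
    have hKne : (K:ℂ) ≠ 0 := Nat.cast_ne_zero.mpr (by omega)
    exact (mul_eq_zero.mp keyr).resolve_left hKne
  · intro H j hj
    rw [dft_partition hK hzK]
    exact Finset.sum_eq_zero fun r hr => by rw [H r (Finset.mem_range.mp hr), mul_zero]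

lemma eps_ne_zero (N : ℕ) : eps N ≠ 0 := Complex.exp_ne_zero _

/-- coefficients of `σⱼ p - p` -/
def cc (a : ℕ → ℂ) (D : ℕ) (mu : ℂ) (k : ℕ) : ℂ :=
  (if k < D then a k * mu ^ (D - k) * mu⁻¹ ^ k else 0) - (if k = 0 then 0 else a (D - k))

lemma dihRefl_z (N j : ℕ) : dihRefl N j zP = C (eps N ^ j) * wP := by
  simp [dihRefl, zP, wP]

lemma dihRefl_w (N j : ℕ) : dihRefl N j wP = C ((eps N ^ j)⁻¹) * zP := by
  have : eps N ^ (-(j:ℤ)) = (eps N ^ j)⁻¹ := by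
    rw [zpow_neg, zpow_natCast]
  simp [dihRefl, zP, wP, this]

lemma refl_sub_eq (N j : ℕ) (a : ℕ → ℂ) (D : ℕ) :
    dihRefl N j (∑ s ∈ Finset.range D, C (a s) * zP ^ (D - s) * wP ^ s)
      - (∑ s ∈ Finset.range D, C (a s) * zP ^ (D - s) * wP ^ s)
      = ∑ k ∈ Finset.range (D+1), C (cc a D (eps N ^ j) k) * zP ^ k * wP ^ (D - k) := by
  set mu := eps N ^ j with hmu
  have h1 : dihRefl N j (∑ s ∈ Finset.range D, C (a s) * zP ^ (D - s) * wP ^ s)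
      = ∑ k ∈ Finset.range (D+1),
          C (if k < D then a k * mu ^ (D - k) * mu⁻¹ ^ k else 0) * zP ^ k * wP ^ (D - k) := by
    rw [map_sum, Finset.sum_range_succ]
    rw [if_neg (lt_irrefl D), map_zero, zero_mul, zero_mul, add_zero]
    refine Finset.sum_congr rfl fun s hs => ?_
    have hsD := Finset.mem_range.mp hs
    rw [if_pos hsD, map_mul, map_mul, map_pow, map_pow, dihRefl_z, dihRefl_w]
    rw [show dihRefl N j (C (a s)) = C (a s) from aeval_C _ _]
    rw [mul_pow, mul_pow, ← MvPolynomial.C_pow, ← MvPolynomial.C_pow,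
      MvPolynomial.C_mul, MvPolynomial.C_mul]
    ring
  have h2 : (∑ s ∈ Finset.range D, C (a s) * zP ^ (D - s) * wP ^ s)
      = ∑ k ∈ Finset.range (D+1),
          C (if k = 0 then 0 else a (D - k)) * zP ^ k * wP ^ (D - k) := by
    rw [Finset.sum_range_succ']
    rw [if_pos rfl, map_zero, zero_mul, zero_mul, add_zero]
    rw [← Finset.sum_range_reflect]
    refine Finset.sum_congr rfl fun k hk => ?_
    have hkD := Finset.mem_range.mp hk
    rw [if_neg (Nat.succ_ne_zero k), show D - (D - 1 - k) = k + 1 by omega,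
      show D - 1 - k = D - (k+1) by omega]
  rw [h1, h2, ← Finset.sum_sub_distrib]
  refine Finset.sum_congr rfl fun k _ => ?_
  rw [cc, MvPolynomial.C_sub]
  ring

lemma sum_cc_eq (a : ℕ → ℂ) (D : ℕ) (mu : ℂ) (hmu : mu ≠ 0) (t : ℕ) :
    ∑ k ∈ Finset.range (D+1), cc a D mu k * (k:ℂ) ^ t * mu ^ k
      = ∑ s ∈ Finset.range D, (a s * mu ^ (D - s)) * ((s:ℂ) ^ t - ((D:ℂ) - s) ^ t) := by
  simp only [cc, sub_mul]
  rw [Finset.sum_sub_distrib]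
  have hA : ∑ k ∈ Finset.range (D+1),
      (if k < D then a k * mu ^ (D - k) * mu⁻¹ ^ k else 0) * (k:ℂ) ^ t * mu ^ k
      = ∑ s ∈ Finset.range D, (a s * mu ^ (D - s)) * (s:ℂ) ^ t := by
    rw [Finset.sum_range_succ, if_neg (lt_irrefl D), zero_mul, zero_mul, add_zero]
    refine Finset.sum_congr rfl fun s hs => ?_
    have hsD := Finset.mem_range.mp hs
    rw [if_pos hsD]
    have : mu⁻¹ ^ s * mu ^ s = 1 := by
      rw [← mul_pow, inv_mul_cancel₀ hmu, one_pow]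
    calc a s * mu ^ (D - s) * mu⁻¹ ^ s * (s:ℂ) ^ t * mu ^ s
        = a s * mu ^ (D - s) * (s:ℂ) ^ t * (mu⁻¹ ^ s * mu ^ s) := by ring
      _ = a s * mu ^ (D - s) * (s:ℂ) ^ t := by rw [this, mul_one]
      _ = _ := by ring
  have hB : ∑ k ∈ Finset.range (D+1),
      (if k = 0 then 0 else a (D - k)) * (k:ℂ) ^ t * mu ^ k
      = ∑ s ∈ Finset.range D, (a s * mu ^ (D - s)) * ((D:ℂ) - s) ^ t := by
    rw [Finset.sum_range_succ', if_pos rfl, zero_mul, zero_mul, add_zero]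
    rw [← Finset.sum_range_reflect fun s => (a s * mu ^ (D - s)) * ((D:ℂ) - s) ^ t]
    refine Finset.sum_congr rfl fun k hk => ?_
    have hkD := Finset.mem_range.mp hk
    rw [if_neg (Nat.succ_ne_zero k)]
    have e1 : D - (D - 1 - k) = k + 1 := by omega
    have e2 : ((D:ℂ) - (D - 1 - k : ℕ)) = ((k:ℂ) + 1) := by
      have : ((D - 1 - k : ℕ) : ℂ) = (D:ℂ) - 1 - k := by
        push_cast [Nat.cast_sub (by omega : k ≤ D - 1), Nat.cast_sub (by omega : 1 ≤ D)]
        ring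
      rw [this]; ring
    rw [e1, e2]
    push_cast
    rw [show D - 1 - k = D - (1 + k) by omega]
    ring
  rw [hA, hB, ← Finset.sum_sub_distrib]
  refine Finset.sum_congr rfl fun s _ => by ring


lemma mu_pow_factor (N j D s : ℕ) (hs : s ≤ D) :
    (eps N ^ j) ^ (D - s) = (eps N ^ j) ^ D * ((eps N)⁻¹) ^ (j * s) := by
  have hne : eps N ^ (j * s) ≠ 0 := pow_ne_zero _ (eps_ne_zero N)
  have e1 : (eps N ^ j) ^ (D - s) * (eps N ^ j) ^ s = (eps N ^ j) ^ D := by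
    rw [← pow_add]; congr 1; omega
  have e2 : (eps N ^ j) ^ s = eps N ^ (j * s) := by rw [← pow_mul]
  have e3 : ((eps N)⁻¹) ^ (j * s) = (eps N ^ (j * s))⁻¹ := by rw [inv_pow]
  rw [← e1, e2, e3, mul_assoc, mul_inv_cancel₀ hne, mul_one]

/-- Per-reflection criterion. -/
lemma per_j (N j : ℕ) (M' : ℕ) (a : ℕ → ℂ) (D : ℕ) :
    ((zP - C (eps N ^ j) * wP) ^ (2 * M' + 1) ∣
        dihRefl N j (∑ s ∈ Finset.range D, C (a s) * zP ^ (D - s) * wP ^ s)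
          - (∑ s ∈ Finset.range D, C (a s) * zP ^ (D - s) * wP ^ s)) ↔
      (∀ t, 1 ≤ t → t ≤ M' →
        ∑ s ∈ Finset.range D,
          (a s * ((D:ℂ) - 2*s) ^ (2*t - 1)) * ((eps N)⁻¹) ^ (j * s) = 0) := by
  have hmu : eps N ^ j ≠ 0 := pow_ne_zero _ (eps_ne_zero N)
  rw [refl_sub_eq, dvd_iff_moments2 _ hmu]
  have step1 : (∀ t < 2 * M' + 1,
      ∑ k ∈ Finset.range (D+1), cc a D (eps N ^ j) k * (k:ℂ) ^ t * (eps N ^ j) ^ k = 0) ↔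
      (∀ t < 2 * M' + 1,
      ∑ s ∈ Finset.range D, (a s * (eps N ^ j) ^ (D - s)) * ((s:ℂ) ^ t - ((D:ℂ) - s) ^ t) = 0) := by
    constructor
    · intro H t ht; rw [← sum_cc_eq a D _ hmu]; exact H t ht
    · intro H t ht; rw [sum_cc_eq a D _ hmu]; exact H t ht
  rw [step1, moments_iff_odd]
  have step2 : ∀ t : ℕ,
      (∑ s ∈ Finset.range D, (a s * (eps N ^ j) ^ (D - s)) * ((D:ℂ) - 2*s) ^ (2*t - 1) = 0) ↔
      (∑ s ∈ Finset.range D,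
        (a s * ((D:ℂ) - 2*s) ^ (2*t - 1)) * ((eps N)⁻¹) ^ (j * s) = 0) := by
    intro t
    have hfac : ∑ s ∈ Finset.range D, (a s * (eps N ^ j) ^ (D - s)) * ((D:ℂ) - 2*s) ^ (2*t - 1)
        = (eps N ^ j) ^ D * ∑ s ∈ Finset.range D,
            (a s * ((D:ℂ) - 2*s) ^ (2*t - 1)) * ((eps N)⁻¹) ^ (j * s) := by
      rw [Finset.mul_sum]
      refine Finset.sum_congr rfl fun s hs => ?_
      rw [mu_pow_factor N j D s (le_of_lt (Finset.mem_range.mp hs))]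
      ring
    rw [hfac]
    constructor
    · intro h
      exact (mul_eq_zero.mp h).resolve_left (pow_ne_zero _ hmu)
    · intro h; rw [h, mul_zero]
  exact ⟨fun H t h1 h2 => (step2 t).mp (H t h1 h2), fun H t h1 h2 => (step2 t).mpr (H t h1 h2)⟩


lemma eps_primitive (N : ℕ) (hN : 1 ≤ N) : IsPrimitiveRoot (eps N) (2 * N) := by
  have h0 : (2 * N : ℕ) ≠ 0 := by omega
  have := Complex.isPrimitiveRoot_exp (2 * N) h0
  have harg : 2 * (Real.pi : ℂ) * Complex.I / ((2 * N : ℕ) : ℂ)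
      = (Real.pi : ℂ) * Complex.I / (N : ℂ) := by
    have hNne : ((N:ℕ) : ℂ) ≠ 0 := Nat.cast_ne_zero.mpr (by omega)
    push_cast
    field_simp
  rwa [harg] at this


end QIaux

theorem quasiInvariance_conditions_general (N m n i : ℕ) (hN : 1 ≤ N) (hnm : n ≤ m)
    (hi1 : 1 ≤ i) (hi2 : i ≤ 2 * N - 1) (hiN : i ≠ N) (a : ℕ → ℂ) :
    IsQuasiInv N m n
        (∑ s ∈ Finset.range ((m + n) * N + i), C (a s) * zP ^ ((m + n) * N + i - s) * wP ^ s) ↔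
      (∀ t, 1 ≤ t → t ≤ n → ∀ r < 2 * N,
          ∑ s ∈ (Finset.range ((m + n) * N + i)).filter (fun s => s % (2 * N) = r),
            a s * ((((m + n) * N + i : ℕ) : ℂ) - 2 * s) ^ (2 * t - 1) = 0) ∧
      (∀ t, n < t → t ≤ m → ∀ r < N,
          ∑ s ∈ (Finset.range ((m + n) * N + i)).filter (fun s => s % N = r),
            a s * ((((m + n) * N + i : ℕ) : ℂ) - 2 * s) ^ (2 * t - 1) = 0) := by
  set D : ℕ := (m + n) * N + i with hD
  set ζ : ℂ := (eps N)⁻¹ with hζ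
  have h2N : 0 < 2 * N := by omega
  have hNpos : 0 < N := hN
  have hzeta : IsPrimitiveRoot ζ (2 * N) := (QIaux.eps_primitive N hN).inv
  have hzeta2 : IsPrimitiveRoot (ζ ^ 2) N := by
    have := hzeta.pow_of_dvd (two_ne_zero) ⟨N, rfl⟩
    rwa [Nat.mul_div_cancel_left N (by omega)] at this
  set b : ℕ → ℕ → ℂ := fun t s => a s * (((D : ℕ) : ℂ) - 2 * s) ^ (2 * t - 1) with hb
  have main : IsQuasiInv N m n
      (∑ s ∈ Finset.range D, C (a s) * zP ^ (D - s) * wP ^ s) ↔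
      ∀ j < 2 * N, ∀ t, 1 ≤ t → t ≤ mult m n j →
        ∑ s ∈ Finset.range D, b t s * ζ ^ (j * s) = 0 := by
    unfold IsQuasiInv
    refine forall_congr' fun j => ?_
    refine imp_congr_right fun hj => ?_
    rw [QIaux.per_j N j (mult m n j) a D]
  rw [main]
  constructor
  · intro H
    constructor
    · intro t ht1 ht2 r hr
      refine (QIaux.dft_iff h2N hzeta (b t) D).mp ?_ r hr
      intro j hj
      exact H j hj t ht1 (by unfold mult; split <;> omega)
    · intro t ht1 ht2 r hr
      refine (QIaux.dft_iff hNpos hzeta2 (b t) D).mp ?_ r hr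
      intro j' hj'
      have hEv : Even (2 * j') := ⟨j', two_mul j'⟩
      have hmult : mult m n (2 * j') = m := by unfold mult; rw [if_pos hEv]
      have := H (2 * j') (by omega) t (by omega) (by omega)
      rw [← this]
      refine Finset.sum_congr rfl fun s _ => ?_
      congr 1
      rw [← pow_mul]
      congr 1
      ring
  · rintro ⟨H1, H2⟩ j hj t ht1 ht2
    by_cases hn : t ≤ n
    · exact (QIaux.dft_iff h2N hzeta (b t) D).mpr (H1 t ht1 hn) j hj
    · have hEv : Even j := by
        by_contra hodd
        have : mult m n j = n := by unfold mult; rw [if_neg hodd]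
        omega
      obtain ⟨j', rfl⟩ := hEv
      have hmult : mult m n (j' + j') = m := by
        unfold mult; rw [if_pos ⟨j', rfl⟩]
      have hj'N : j' < N := by omega
      have := (QIaux.dft_iff hNpos hzeta2 (b t) D).mpr
        (H2 t (by omega) (by omega)) j' hj'N
      rw [← this]
      refine Finset.sum_congr rfl fun s _ => ?_
      congr 1
      rw [← pow_mul]
      congr 1
      ring
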